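/- For two m-dimensional linear subspaces V₁, V₂ of a Hilbert space H, the operator norm of the difference of their orthogonal projections equals the Hausdorff distance between V₁ ∩ B(0,1) and V₂ ∩ B(0,1). -/

import Mathlib

open MeasureTheory Metric ContinuousLinearMap
open scoped RealInnerProductSpace

section Aux

variable {H : Type*} [NormedAddCommGroup H] [InnerProductSpace ℝ H] [CompleteSpace H]

private lemma proj_norm_le (K : Submodule ℝ H) [CompleteSpace K] (x : H) :
    ‖(K.subtypeL.comp (K.orthogonalProjectionOnto)) x‖ ≤ ‖x‖ := by
  have h : ‖(K.subtypeL.comp (K.orthogonalProjectionOnto)) x‖ = ‖K.orthogonalProjectionOnto x‖ := rfl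
  rw [h]
  calc ‖K.orthogonalProjectionOnto x‖ ≤ ‖K.orthogonalProjectionOnto‖ * ‖x‖ := le_opNorm _ _
    _ ≤ 1 * ‖x‖ := by
        exact mul_le_mul_of_nonneg_right (Submodule.orthogonalProjectionOnto_norm_le K) (norm_nonneg x)
    _ = ‖x‖ := one_mul _

private lemma proj_min (K : Submodule ℝ H) [CompleteSpace K] (x : H) {y : H}
    (hy : y ∈ K) :
    ‖x - (K.subtypeL.comp (K.orthogonalProjectionOnto)) x‖ ≤ ‖x - y‖ := by
  set P := K.subtypeL.comp (K.orthogonalProjectionOnto) with hP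
  have h1 : x - P x ∈ Kᗮ := Submodule.sub_starProjection_mem_orthogonal x
  have h2 : P x - y ∈ K := K.sub_mem (K.orthogonalProjectionOnto x).2 hy
  have hinner : ⟪P x - y, x - P x⟫ = 0 := Submodule.inner_right_of_mem_orthogonal h2 h1
  have hinner' : ⟪x - P x, P x - y⟫ = 0 := by rwa [real_inner_comm]
  have hsum : (x - P x) + (P x - y) = x - y := by abel
  have hpyth : ‖x - y‖ * ‖x - y‖ = ‖x - P x‖ * ‖x - P x‖ + ‖P x - y‖ * ‖P x - y‖ := by
    rw [← hsum]
    exact norm_add_sq_eq_norm_sq_add_norm_sq_real hinner'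
  nlinarith [norm_nonneg (x - y), norm_nonneg (x - P x), norm_nonneg (P x - y)]

private lemma infDist_eq (K : Submodule ℝ H) [CompleteSpace K] {x : H} (hx : ‖x‖ ≤ 1) :
    Metric.infDist x ((K : Set H) ∩ Metric.closedBall 0 1)
      = ‖x - (K.subtypeL.comp (K.orthogonalProjectionOnto)) x‖ := by
  set P := K.subtypeL.comp (K.orthogonalProjectionOnto) with hP
  have hPmem : P x ∈ (K : Set H) ∩ Metric.closedBall 0 1 := by
    refine ⟨(K.orthogonalProjectionOnto x).2, ?_⟩
    rw [Metric.mem_closedBall, dist_zero_right]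
    exact (proj_norm_le K x).trans hx
  refine le_antisymm ?_ ?_
  · have := Metric.infDist_le_dist_of_mem (x := x) hPmem
    rwa [dist_eq_norm] at this
  · by_contra h
    push_neg at h
    rw [Metric.infDist_lt_iff ⟨P x, hPmem⟩] at h
    obtain ⟨y, hy, hlt⟩ := h
    rw [dist_eq_norm] at hlt
    exact absurd hlt (not_lt.mpr (proj_min K x hy.1))

end Aux

/-- Lemma 2.1(1): for two `m`-dimensional subspaces of a real Hilbert space, the operator
norm of the difference of the orthogonal projections equals the Hausdorff distance between
the intersections of the subspaces with the closed unit ball. -/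
theorem stmt0 {H : Type*} [NormedAddCommGroup H] [InnerProductSpace ℝ H] [CompleteSpace H]
    (m : ℕ) (hm : 1 ≤ m) (V₁ V₂ : Submodule ℝ H)
    [FiniteDimensional ℝ V₁] [FiniteDimensional ℝ V₂]
    (h₁ : Module.finrank ℝ V₁ = m) (h₂ : Module.finrank ℝ V₂ = m) :
    ‖V₁.subtypeL.comp (V₁.orthogonalProjectionOnto) - V₂.subtypeL.comp (V₂.orthogonalProjectionOnto)‖
      = Metric.hausdorffDist ((V₁ : Set H) ∩ Metric.closedBall 0 1)
        ((V₂ : Set H) ∩ Metric.closedBall 0 1) := by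
  set P₁ := V₁.subtypeL.comp (V₁.orthogonalProjectionOnto) with hP₁
  set P₂ := V₂.subtypeL.comp (V₂.orthogonalProjectionOnto) with hP₂
  set S₁ := (V₁ : Set H) ∩ Metric.closedBall 0 1 with hS₁
  set S₂ := (V₂ : Set H) ∩ Metric.closedBall 0 1 with hS₂
  set d := Metric.hausdorffDist S₁ S₂ with hd
  have hd0 : 0 ≤ d := Metric.hausdorffDist_nonneg
  have h0₁ : (0 : H) ∈ S₁ := ⟨V₁.zero_mem, Metric.mem_closedBall_self zero_le_one⟩
  have h0₂ : (0 : H) ∈ S₂ := ⟨V₂.zero_mem, Metric.mem_closedBall_self zero_le_one⟩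
  have hbd₁ : Bornology.IsBounded S₁ :=
    (Metric.isBounded_closedBall).subset Set.inter_subset_right
  have hbd₂ : Bornology.IsBounded S₂ :=
    (Metric.isBounded_closedBall).subset Set.inter_subset_right
  have hfin : EMetric.hausdorffEdist S₁ S₂ ≠ ⊤ :=
    Metric.hausdorffEdist_ne_top_of_nonempty_of_bounded ⟨0, h0₁⟩ ⟨0, h0₂⟩ hbd₁ hbd₂
  -- membership facts
  have hmem₁ : ∀ x : H, ‖x‖ ≤ 1 → P₁ x ∈ S₁ := fun x hx =>
    ⟨(V₁.orthogonalProjectionOnto x).2, by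
      rw [Metric.mem_closedBall, dist_zero_right]; exact (proj_norm_le V₁ x).trans hx⟩
  have hmem₂ : ∀ x : H, ‖x‖ ≤ 1 → P₂ x ∈ S₂ := fun x hx =>
    ⟨(V₂.orthogonalProjectionOnto x).2, by
      rw [Metric.mem_closedBall, dist_zero_right]; exact (proj_norm_le V₂ x).trans hx⟩
  -- the two "gap" bounds
  have ha : ‖(1 - P₂).comp P₁‖ ≤ d := by
    refine opNorm_le_of_unit_norm hd0 fun x hx => ?_
    have hx1 : ‖x‖ ≤ 1 := le_of_eq hx
    have hPx : ‖P₁ x‖ ≤ 1 := (proj_norm_le V₁ x).trans hx1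
    have : ‖((1 - P₂).comp P₁) x‖ = ‖P₁ x - P₂ (P₁ x)‖ := by
      simp [ContinuousLinearMap.sub_apply]
    rw [this, ← infDist_eq V₂ hPx]
    exact Metric.infDist_le_hausdorffDist_of_mem (hmem₁ x hx1) hfin
  have hb : ‖(1 - P₁).comp P₂‖ ≤ d := by
    refine opNorm_le_of_unit_norm hd0 fun x hx => ?_
    have hx1 : ‖x‖ ≤ 1 := le_of_eq hx
    have hPx : ‖P₂ x‖ ≤ 1 := (proj_norm_le V₂ x).trans hx1
    have : ‖((1 - P₁).comp P₂) x‖ = ‖P₂ x - P₁ (P₂ x)‖ := by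
      simp [ContinuousLinearMap.sub_apply]
    rw [this, ← infDist_eq V₁ hPx]
    have := Metric.infDist_le_hausdorffDist_of_mem (hmem₂ x hx1)
      (by rw [Metric.hausdorffEDist_comm]; exact hfin)
    rwa [Metric.hausdorffDist_comm] at this
  -- adjoint fact : ‖P₁ ∘ (1 - P₂)‖ = ‖(1 - P₂) ∘ P₁‖
  have hadj : ContinuousLinearMap.adjoint ((1 - P₂).comp P₁) = P₁.comp (1 - P₂) := by
    rw [ContinuousLinearMap.adjoint_comp]
    rw [IsSelfAdjoint.adjoint_eq (A := P₁) (isSelfAdjoint_starProjection V₁)]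
    congr 1
    rw [map_sub]
    rw [IsSelfAdjoint.adjoint_eq (A := P₂) (isSelfAdjoint_starProjection V₂)]
    congr 1
    simp [ContinuousLinearMap.one_def, ContinuousLinearMap.adjoint_id]
  have hnorm : ‖P₁.comp (1 - P₂)‖ = ‖(1 - P₂).comp P₁‖ := by
    rw [← hadj]
    exact (ContinuousLinearMap.adjoint : (H →L[ℝ] H) ≃ₗᵢ⋆[ℝ] (H →L[ℝ] H)).norm_map _
  refine le_antisymm ?_ ?_
  · -- ‖P₁ - P₂‖ ≤ d
    refine opNorm_le_bound _ hd0 fun x => ?_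
    set u := P₁ (x - P₂ x) with hu
    set v := P₂ x - P₁ (P₂ x) with hv
    have hdecomp : (P₁ - P₂) x = u + (-v) := by
      simp only [hu, hv, ContinuousLinearMap.sub_apply, map_sub]
      abel
    have huV : u ∈ V₁ := (V₁.orthogonalProjectionOnto (x - P₂ x)).2
    have hvV : v ∈ V₁ᗮ := Submodule.sub_starProjection_mem_orthogonal (P₂ x)
    have hvV' : -v ∈ V₁ᗮ := neg_mem hvV
    have hinner : ⟪u, -v⟫ = 0 := Submodule.inner_right_of_mem_orthogonal huV hvV'
    have hpyth : ‖(P₁ - P₂) x‖ * ‖(P₁ - P₂) x‖ = ‖u‖ * ‖u‖ + ‖v‖ * ‖v‖ := by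
      rw [hdecomp, norm_add_sq_eq_norm_sq_add_norm_sq_real hinner, norm_neg]
    -- bound u
    have hidem₂ : (1 - P₂) (x - P₂ x) = x - P₂ x := by
      have : P₂ (x - P₂ x) = 0 := by
        have hmem : x - P₂ x ∈ V₂ᗮ := Submodule.sub_starProjection_mem_orthogonal x
        have := Submodule.orthogonalProjectionOnto_apply_of_mem_orthogonal hmem
        show (V₂.subtypeL.comp (V₂.orthogonalProjectionOnto)) (x - P₂ x) = 0
        simp only [ContinuousLinearMap.comp_apply, Submodule.subtypeL_apply, this,
          ZeroMemClass.coe_zero]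
      simp [ContinuousLinearMap.sub_apply, this]
    have hubound : ‖u‖ ≤ d * ‖x - P₂ x‖ := by
      have : u = (P₁.comp (1 - P₂)) (x - P₂ x) := by
        rw [ContinuousLinearMap.comp_apply, hidem₂]
      rw [this]
      calc ‖(P₁.comp (1 - P₂)) (x - P₂ x)‖ ≤ ‖P₁.comp (1 - P₂)‖ * ‖x - P₂ x‖ := le_opNorm _ _
        _ ≤ d * ‖x - P₂ x‖ := by
            apply mul_le_mul_of_nonneg_right _ (norm_nonneg _)
            rw [hnorm]; exact ha
    -- bound v
    have hidem₂' : P₂ (P₂ x) = P₂ x := by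
      show ((V₂.orthogonalProjectionOnto (P₂ x) : V₂) : H) = P₂ x
      exact Submodule.starProjection_eq_self_iff.mpr (V₂.orthogonalProjectionOnto x).2
    have hvbound : ‖v‖ ≤ d * ‖P₂ x‖ := by
      have : v = ((1 - P₁).comp P₂) (P₂ x) := by
        simp only [ContinuousLinearMap.comp_apply, ContinuousLinearMap.sub_apply,
          ContinuousLinearMap.one_apply, hidem₂', hv]
      rw [this]
      calc ‖((1 - P₁).comp P₂) (P₂ x)‖ ≤ ‖(1 - P₁).comp P₂‖ * ‖P₂ x‖ := le_opNorm _ _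
        _ ≤ d * ‖P₂ x‖ := mul_le_mul_of_nonneg_right hb (norm_nonneg _)
    -- Pythagoras for x
    have hxpyth : ‖x - P₂ x‖ * ‖x - P₂ x‖ + ‖P₂ x‖ * ‖P₂ x‖ = ‖x‖ * ‖x‖ := by
      have hmem : x - P₂ x ∈ V₂ᗮ := Submodule.sub_starProjection_mem_orthogonal x
      have hmem2 : P₂ x ∈ V₂ := (V₂.orthogonalProjectionOnto x).2
      have hin : ⟪x - P₂ x, P₂ x⟫ = 0 := by
        rw [real_inner_comm]
        exact Submodule.inner_right_of_mem_orthogonal hmem2 hmem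
      have := norm_add_sq_eq_norm_sq_add_norm_sq_real hin
      rw [sub_add_cancel] at this
      exact this.symm
    have h1 : ‖u‖ * ‖u‖ ≤ (d * ‖x - P₂ x‖) * (d * ‖x - P₂ x‖) :=
      mul_le_mul hubound hubound (norm_nonneg _) (mul_nonneg hd0 (norm_nonneg _))
    have h2 : ‖v‖ * ‖v‖ ≤ (d * ‖P₂ x‖) * (d * ‖P₂ x‖) :=
      mul_le_mul hvbound hvbound (norm_nonneg _) (mul_nonneg hd0 (norm_nonneg _))
    have hsq : ‖(P₁ - P₂) x‖ * ‖(P₁ - P₂) x‖ ≤ (d * ‖x‖) * (d * ‖x‖) := by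
      nlinarith [sq_nonneg d]
    nlinarith [norm_nonneg ((P₁ - P₂) x), mul_nonneg hd0 (norm_nonneg x)]
  · -- d ≤ ‖P₁ - P₂‖
    refine Metric.hausdorffDist_le_of_infDist (norm_nonneg _) ?_ ?_
    · intro x hx
      have hx1 : ‖x‖ ≤ 1 := by
        have := hx.2; rwa [Metric.mem_closedBall, dist_zero_right] at this
      rw [infDist_eq V₂ hx1]
      have hfix : P₁ x = x := by
        show (V₁.subtypeL.comp (V₁.orthogonalProjectionOnto)) x = x
        simp only [ContinuousLinearMap.comp_apply, Submodule.subtypeL_apply]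
        exact Submodule.starProjection_eq_self_iff.mpr hx.1
      have : x - P₂ x = (P₁ - P₂) x := by
        rw [ContinuousLinearMap.sub_apply, hfix]
      rw [this]
      calc ‖(P₁ - P₂) x‖ ≤ ‖P₁ - P₂‖ * ‖x‖ := le_opNorm _ _
        _ ≤ ‖P₁ - P₂‖ * 1 := mul_le_mul_of_nonneg_left hx1 (norm_nonneg _)
        _ = ‖P₁ - P₂‖ := mul_one _
    · intro x hx
      have hx1 : ‖x‖ ≤ 1 := by
        have := hx.2; rwa [Metric.mem_closedBall, dist_zero_right] at this
      rw [infDist_eq V₁ hx1]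
      have hfix : P₂ x = x := by
        show (V₂.subtypeL.comp (V₂.orthogonalProjectionOnto)) x = x
        simp only [ContinuousLinearMap.comp_apply, Submodule.subtypeL_apply]
        exact Submodule.starProjection_eq_self_iff.mpr hx.1
      have : x - P₁ x = -((P₁ - P₂) x) := by
        rw [ContinuousLinearMap.sub_apply, hfix]; abel
      rw [this, norm_neg]
      calc ‖(P₁ - P₂) x‖ ≤ ‖P₁ - P₂‖ * ‖x‖ := le_opNorm _ _
        _ ≤ ‖P₁ - P₂‖ * 1 := mul_le_mul_of_nonneg_left hx1 (norm_nonneg _)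
        _ = ‖P₁ - P₂‖ := mul_one _
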